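/- Concavity bound linking causal entropy of a representation to that of the base variable: for each t, the entropy of the mixture p_Y^{do(T=t)} = Σ_x p*(x|t) p_Y^{do(X=x)} is at least the corresponding mixture of entropies, i.e., H(Y|do(T=t)) ≥ Σ_x p*(x|t) H(Y|do(X=x)); consequently H_c(Y|do(T)) ≥ H_c(Y|do(X∼p*)) and I_c(Y|do(T)) ≤ I_c(Y|do(X∼p*)) when the protocol over T is the induced one p*(t) = Σ_x q(t|x)p*(x). -/
import Mathlib


open Finset

/-- Shannon entropy of a finitely supported distribution. -/
noncomputable def ent {α : Type*} [Fintype α] (p : α → ℝ) : ℝ := ∑ a, Real.negMulLog (p a)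

lemma ent_mix {X Y : Type*} [Fintype X] [Fintype Y] (w : X → ℝ)
    (hw0 : ∀ x, 0 ≤ w x) (hw1 : ∑ x, w x = 1)
    (pdo : X → Y → ℝ) (hd0 : ∀ x y, 0 ≤ pdo x y) :
    ∑ x, w x * ent (pdo x) ≤ ent (fun y => ∑ x, w x * pdo x y) := by
  unfold ent
  have : ∑ x, w x * ∑ y, Real.negMulLog (pdo x y)
      = ∑ y, ∑ x, w x * Real.negMulLog (pdo x y) := by
    simp_rw [Finset.mul_sum]; exact Finset.sum_comm
  rw [this]
  refine Finset.sum_le_sum fun y _ => ?_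
  have := Real.concaveOn_negMulLog.le_map_sum (t := Finset.univ)
    (w := w) (p := fun x => pdo x y) (fun i _ => hw0 i) hw1
    (fun i _ => hd0 i y)
  simpa using this

/-- Concavity bound: for each `t` with `p*(t) > 0`, the entropy of the mixture
`p_Y^{do(T=t)} = ∑ x p*(x|t)·p_Y^{do(X=x)}` is at least the mixture of entropies;
consequently `H_c(Y|do(T)) ≥ H_c(Y|do(X∼p*))` and `I_c(Y|do(T)) ≤ I_c(Y|do(X∼p*))`
with the induced protocol `p*(t) = ∑ x q(t|x)p*(x)`. -/
theorem concavity_bound_for_representations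
    {X T Y : Type*} [Fintype X] [Fintype T] [Fintype Y]
    (pstar : X → ℝ) (hps0 : ∀ x, 0 ≤ pstar x) (hps1 : ∑ x, pstar x = 1)
    (q : T → X → ℝ) (hq0 : ∀ t x, 0 ≤ q t x) (hq1 : ∀ x, ∑ t, q t x = 1)
    (pdo : X → Y → ℝ) (hd0 : ∀ x y, 0 ≤ pdo x y) (hd1 : ∀ x, ∑ y, pdo x y = 1)
    (pY : Y → ℝ) :
    (∀ t, 0 < ∑ x, q t x * pstar x →
      (∑ x, (q t x * pstar x / ∑ x', q t x' * pstar x') * ent (pdo x))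
        ≤ ent (fun y => ∑ x, (q t x * pstar x / ∑ x', q t x' * pstar x') * pdo x y)) ∧
    ((∑ x, pstar x * ent (pdo x))
      ≤ ∑ t, (∑ x, q t x * pstar x) *
          ent (fun y => ∑ x, (q t x * pstar x / ∑ x', q t x' * pstar x') * pdo x y)) ∧
    ((ent pY - ∑ t, (∑ x, q t x * pstar x) *
          ent (fun y => ∑ x, (q t x * pstar x / ∑ x', q t x' * pstar x') * pdo x y))
      ≤ ent pY - ∑ x, pstar x * ent (pdo x)) := by
  have key : ∀ t, 0 < ∑ x, q t x * pstar x →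
      (∑ x, (q t x * pstar x / ∑ x', q t x' * pstar x') * ent (pdo x))
        ≤ ent (fun y => ∑ x, (q t x * pstar x / ∑ x', q t x' * pstar x') * pdo x y) := by
    intro t ht
    refine ent_mix _ (fun x => ?_) ?_ pdo hd0
    · exact div_nonneg (mul_nonneg (hq0 t x) (hps0 x)) ht.le
    · rw [← Finset.sum_div, div_self ht.ne']
  refine ⟨key, ?_⟩
  have main : (∑ x, pstar x * ent (pdo x))
      ≤ ∑ t, (∑ x, q t x * pstar x) *
          ent (fun y => ∑ x, (q t x * pstar x / ∑ x', q t x' * pstar x') * pdo x y) := by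
    have lhs : (∑ x, pstar x * ent (pdo x))
        = ∑ t, ∑ x, q t x * pstar x * ent (pdo x) := by
      rw [Finset.sum_comm]
      refine Finset.sum_congr rfl fun x _ => ?_
      rw [← Finset.sum_mul, ← Finset.sum_mul, hq1 x, one_mul]
    rw [lhs]
    refine Finset.sum_le_sum fun t _ => ?_
    rcases lt_or_eq_of_le (Finset.sum_nonneg fun x _ =>
        mul_nonneg (hq0 t x) (hps0 x)) with ht | ht
    · have := key t ht
      calc ∑ x, q t x * pstar x * ent (pdo x)
          = (∑ x, q t x * pstar x) *
            ∑ x, (q t x * pstar x / ∑ x', q t x' * pstar x') * ent (pdo x) := by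
            rw [Finset.mul_sum]
            refine Finset.sum_congr rfl fun x _ => ?_
            field_simp
        _ ≤ _ := by
            exact mul_le_mul_of_nonneg_left this ht.le
    · have hz : ∀ x, q t x * pstar x = 0 := by
        intro x
        have := (Finset.sum_eq_zero_iff_of_nonneg
          (fun x _ => mul_nonneg (hq0 t x) (hps0 x))).1 ht.symm
        exact this x (Finset.mem_univ x)
      simp [← ht, hz]
  exact ⟨main, by linarith⟩
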